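/- Per-iteration contraction: let x̃^{(t)} be any point in ℝ^d, let α^{(t+1)} minimize α ↦ f(ASα + Ax̃^{(t)}) + (λ/2)‖Sα + x̃^{(t)}‖₂², and set x̃^{(t+1)} = −λ⁻¹Aᵀ∇f(ASα^{(t+1)} + Ax̃^{(t)}). If λ ≥ 2μZ_f², then ‖x̃^{(t+1)} − x*‖₂ ≤ √(μ/(2λ)) · Z_f · ‖x̃^{(t)} − x*‖₂. -/

import Mathlib

open Matrix Finset Real Set

noncomputable section

namespace Sketch

/-- The ℓ2 norm of a vector in `Fin k → ℝ`. -/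
def norm2 {k : ℕ} (x : Fin k → ℝ) : ℝ := Real.sqrt (∑ i, x i ^ 2)

/-- The continuous linear functional `v ↦ ⟨w, v⟩`; used to state that a function has
gradient `w` at a point. -/
def dotCLM {k : ℕ} (w : Fin k → ℝ) : (Fin k → ℝ) →L[ℝ] ℝ :=
  LinearMap.toContinuousLinearMap
    { toFun := fun v => w ⬝ᵥ v
      map_add' := fun a b => dotProduct_add w a b
      map_smul' := fun c a => by
        simp [dotProduct, Finset.mul_sum, mul_left_comm] }

/-- The domain of the Fenchel conjugate `f*`. -/
def fenchelDom {k : ℕ} (f : (Fin k → ℝ) → ℝ) : Set (Fin k → ℝ) :=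
  {z | BddAbove (Set.range fun w => w ⬝ᵥ z - f w)}

/-- The Fenchel conjugate `f*(z) = sup_w (⟨w, z⟩ - f(w))` (as a real-valued supremum,
meaningful on `fenchelDom f`). -/
def fenchel {k : ℕ} (f : (Fin k → ℝ) → ℝ) (z : Fin k → ℝ) : ℝ :=
  ⨆ w, (w ⬝ᵥ z - f w)

/-- The subdifferential of the Fenchel conjugate `f*` at `z`. -/
def fenchelSubdiff {k : ℕ} (f : (Fin k → ℝ) → ℝ) (z : Fin k → ℝ) : Set (Fin k → ℝ) :=
  {g | ∀ y ∈ fenchelDom f, fenchel f z + g ⬝ᵥ (y - z) ≤ fenchel f y}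

/-- `P` is the orthogonal projector onto the range (column space) of `S`. -/
def IsOrthProj {q m : ℕ} (S : Matrix (Fin q) (Fin m) ℝ) (P : Matrix (Fin q) (Fin q) ℝ) : Prop :=
  Pᵀ = P ∧ P * P = P ∧ P * S = S ∧ ∃ C : Matrix (Fin m) (Fin q) ℝ, P = S * C

/-- The quantity `Z_f`: the supremum of `(Δᵀ B P⊥ Bᵀ Δ)^{1/2} / ‖Δ‖₂` over nonzero
`Δ ∈ dom f* - z*`. -/
def Zf {k q : ℕ} (f : (Fin k → ℝ) → ℝ) (B : Matrix (Fin k) (Fin q) ℝ)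
    (Pperp : Matrix (Fin q) (Fin q) ℝ) (zs : Fin k → ℝ) : ℝ :=
  sSup {r | ∃ Δ : Fin k → ℝ, Δ ≠ 0 ∧ zs + Δ ∈ fenchelDom f ∧
    r = Real.sqrt (Δ ⬝ᵥ (B * Pperp * Bᵀ).mulVec Δ) / norm2 Δ}

/-- The spectral norm (largest singular value) of a matrix. -/
def specNorm {a b : ℕ} (M : Matrix (Fin a) (Fin b) ℝ) : ℝ :=
  sSup {r | ∃ v : Fin b → ℝ, norm2 v = 1 ∧ r = norm2 (M.mulVec v)}

/-- The eigenvalues of `A * Aᵀ` (i.e. the squared singular values of `A`),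
sorted in decreasing order. -/
def eigsDesc {n d : ℕ} (A : Matrix (Fin n) (Fin d) ℝ) : Fin n → ℝ := fun i =>
  ((Matrix.isHermitian_mul_conjTranspose_self A).eigenvalues ∘
    Tuple.sort (Matrix.isHermitian_mul_conjTranspose_self A).eigenvalues) i.rev

/-- The spectral tail `R_k(A) = (σ_k² + (1/k) ∑_{j=k+1}^ρ σ_j²)^{1/2}`. -/
def Rk {n d : ℕ} (A : Matrix (Fin n) (Fin d) ℝ) (k : ℕ) : ℝ :=
  Real.sqrt ((∑ j : Fin n, if (j : ℕ) + 1 = k then eigsDesc A j else 0)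
    + (1 / (k : ℝ)) * ∑ j : Fin n, if k ≤ (j : ℕ) then eigsDesc A j else 0)

/-- Product measure on `n × m` matrices with i.i.d. standard Gaussian entries. -/
def gaussMatrix (n m : ℕ) : MeasureTheory.Measure (Fin n → Fin m → ℝ) :=
  MeasureTheory.Measure.pi fun _ => MeasureTheory.Measure.pi fun _ =>
    ProbabilityTheory.gaussianReal 0 1


/-- The largest eigenvalue (Rayleigh quotient supremum) of a symmetric matrix. -/
def eigMax {q : ℕ} (M : Matrix (Fin q) (Fin q) ℝ) : ℝ :=
  sSup {r | ∃ v : Fin q → ℝ, norm2 v = 1 ∧ r = v ⬝ᵥ M.mulVec v}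

/-- The smallest eigenvalue (Rayleigh quotient infimum) of a symmetric matrix. -/
def eigMin {q : ℕ} (M : Matrix (Fin q) (Fin q) ℝ) : ℝ :=
  sInf {r | ∃ v : Fin q → ℝ, norm2 v = 1 ∧ r = v ⬝ᵥ M.mulVec v}



/-! ### Auxiliary lemmas -/

section Aux

variable {k : ℕ}

lemma dotProduct_self_eq (x : Fin k → ℝ) : x ⬝ᵥ x = ∑ i, x i ^ 2 := by
  simp [dotProduct, sq]

lemma dot_self_nonneg (x : Fin k → ℝ) : 0 ≤ x ⬝ᵥ x := by
  rw [dotProduct_self_eq]; positivity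

lemma norm2_eq_sqrt_dot (x : Fin k → ℝ) : norm2 x = Real.sqrt (x ⬝ᵥ x) := by
  rw [norm2, dotProduct_self_eq]

lemma norm2_nonneg (x : Fin k → ℝ) : 0 ≤ norm2 x := Real.sqrt_nonneg _

lemma sq_norm2 (x : Fin k → ℝ) : norm2 x ^ 2 = x ⬝ᵥ x := by
  rw [norm2_eq_sqrt_dot, Real.sq_sqrt (dot_self_nonneg x)]

lemma norm2_pos {x : Fin k → ℝ} (hx : x ≠ 0) : 0 < norm2 x := by
  rw [norm2]
  apply Real.sqrt_pos.2
  obtain ⟨i, hi⟩ := Function.ne_iff.1 hx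
  have h2 : (0:ℝ) < x i ^ 2 := by
    have := abs_pos.2 hi
    calc (0:ℝ) < |x i| ^ 2 := pow_pos this 2
    _ = x i ^ 2 := sq_abs _
  exact lt_of_lt_of_le h2 (Finset.single_le_sum (fun j _ => sq_nonneg (x j)) (Finset.mem_univ i))

lemma dot_le_norm2_mul_norm2 (x y : Fin k → ℝ) : x ⬝ᵥ y ≤ norm2 x * norm2 y := by
  have h := Finset.sum_mul_sq_le_sq_mul_sq Finset.univ x y
  refine (le_abs_self _).trans ?_
  rw [← Real.sqrt_sq_eq_abs, norm2, norm2, ← Real.sqrt_mul (by positivity)]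
  exact Real.sqrt_le_sqrt (by simpa [dotProduct] using h)

lemma norm2_smul (c : ℝ) (x : Fin k → ℝ) : norm2 (c • x) = |c| * norm2 x := by
  rw [norm2, norm2, ← Real.sqrt_sq_eq_abs, ← Real.sqrt_mul (sq_nonneg c), Finset.mul_sum]
  congr 1
  exact Finset.sum_congr rfl fun i _ => by simp [mul_pow]

lemma norm2_mulVec_le {a b : ℕ} (M : Matrix (Fin a) (Fin b) ℝ) (v : Fin b → ℝ) :
    norm2 (M *ᵥ v) ≤ Real.sqrt (∑ i, ∑ j, M i j ^ 2) * norm2 v := by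
  rw [norm2, norm2, ← Real.sqrt_mul (by positivity)]
  apply Real.sqrt_le_sqrt
  rw [Finset.sum_mul]
  apply Finset.sum_le_sum
  intro i _
  calc (M *ᵥ v) i ^ 2 = (∑ j, M i j * v j) ^ 2 := by simp [Matrix.mulVec, dotProduct]
  _ ≤ (∑ j, M i j ^ 2) * ∑ j, v j ^ 2 := Finset.sum_mul_sq_le_sq_mul_sq Finset.univ (M i) v

lemma dot_mulVec_symm {q : ℕ} {M : Matrix (Fin q) (Fin q) ℝ} (hM : Mᵀ = M) (x y : Fin q → ℝ) :
    (M *ᵥ x) ⬝ᵥ y = x ⬝ᵥ (M *ᵥ y) := by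
  have h : x ᵥ* M = M *ᵥ x := by rw [← Matrix.mulVec_transpose, hM]
  rw [Matrix.dotProduct_mulVec, h]

lemma dotCLM_apply (w v : Fin k → ℝ) : dotCLM w v = w ⬝ᵥ v := rfl

/-- `v ↦ M v` as a continuous linear map. -/
def mulVecCLM {a b : ℕ} (M : Matrix (Fin a) (Fin b) ℝ) : (Fin b → ℝ) →L[ℝ] (Fin a → ℝ) :=
  LinearMap.toContinuousLinearMap M.mulVecLin

lemma mulVecCLM_apply {a b : ℕ} (M : Matrix (Fin a) (Fin b) ℝ) (v : Fin b → ℝ) :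
    mulVecCLM M v = M *ᵥ v := rfl

lemma hasDerivAt_line {f : (Fin k → ℝ) → ℝ} {f' : (Fin k → ℝ) → Fin k → ℝ}
    (hdiff : ∀ w, HasFDerivAt f (dotCLM (f' w)) w) (x d : Fin k → ℝ) (t : ℝ) :
    HasDerivAt (fun t : ℝ => f (x + t • d)) (f' (x + t • d) ⬝ᵥ d) t := by
  have hc : HasDerivAt (fun t : ℝ => x + t • d) d t := by
    simpa using ((hasDerivAt_id t).smul_const d).const_add x
  have := (hdiff (x + t • d)).comp_hasDerivAt t hc
  simpa [Function.comp_def, dotCLM_apply] using this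

lemma hasFDerivAt_dotself (p : Fin k → ℝ) :
    HasFDerivAt (fun x : Fin k → ℝ => x ⬝ᵥ x) (dotCLM ((2:ℝ) • p)) p := by
  have h : ∀ i ∈ Finset.univ, HasFDerivAt (fun x : Fin k → ℝ => x i * x i)
      (p i • dotCLM (Pi.single i 1) + p i • dotCLM (Pi.single i 1)) p := by
    intro i _
    have hfun : (fun x : Fin k → ℝ => (Pi.single i 1 : Fin k → ℝ) ⬝ᵥ x) = fun x => x i := by
      funext x; simp [dotProduct, Pi.single_apply]
    have hp : HasFDerivAt (fun x : Fin k → ℝ => x i) (dotCLM (Pi.single i 1)) p := by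
      rw [← hfun]; exact (dotCLM (Pi.single i 1)).hasFDerivAt
    exact hp.mul hp
  have hsum := HasFDerivAt.fun_sum h
  have heq : (fun x : Fin k → ℝ => ∑ i, x i * x i) = fun x : Fin k → ℝ => x ⬝ᵥ x := by
    funext x; simp [dotProduct]
  rw [heq] at hsum
  refine hsum.congr_fderiv (Eq.symm ?_)
  ext v
  simp [dotCLM_apply, dotProduct, Finset.mul_sum, Finset.sum_add_distrib,
    Pi.single_apply]
  rw [← Finset.sum_add_distrib]
  exact Finset.sum_congr rfl fun i _ => by ring

/-- gradient of the generic objective `x ↦ f (M x + c) + lam/2 * ⟨N x + e, N x + e⟩`. -/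
lemma hasFDerivAt_obj {n d : ℕ} {f : (Fin n → ℝ) → ℝ} {f' : (Fin n → ℝ) → Fin n → ℝ}
    (hdiff : ∀ w, HasFDerivAt f (dotCLM (f' w)) w)
    (M : Matrix (Fin n) (Fin d) ℝ) (c : Fin n → ℝ) {q : ℕ}
    (N : Matrix (Fin q) (Fin d) ℝ) (e : Fin q → ℝ) (lam : ℝ) (p : Fin d → ℝ) :
    HasFDerivAt (fun x => f (M *ᵥ x + c) + lam / 2 * ((N *ᵥ x + e) ⬝ᵥ (N *ᵥ x + e)))
      (dotCLM (Mᵀ *ᵥ f' (M *ᵥ p + c) + lam • (Nᵀ *ᵥ (N *ᵥ p + e)))) p := by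
  have haffM : HasFDerivAt (fun x : Fin d → ℝ => M *ᵥ x + c) (mulVecCLM M) p := by
    simpa [mulVecCLM_apply] using ((mulVecCLM M).hasFDerivAt (x := p)).add_const c
  have haffN : HasFDerivAt (fun x : Fin d → ℝ => N *ᵥ x + e) (mulVecCLM N) p := by
    simpa [mulVecCLM_apply] using ((mulVecCLM N).hasFDerivAt (x := p)).add_const e
  have h1 : HasFDerivAt (fun x => f (M *ᵥ x + c))
      ((dotCLM (f' (M *ᵥ p + c))).comp (mulVecCLM M)) p :=
    (hdiff (M *ᵥ p + c)).comp p haffM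
  have h2 : HasFDerivAt (fun x : Fin d → ℝ => (N *ᵥ x + e) ⬝ᵥ (N *ᵥ x + e))
      ((dotCLM ((2:ℝ) • (N *ᵥ p + e))).comp (mulVecCLM N)) p :=
    (hasFDerivAt_dotself (N *ᵥ p + e)).comp (g := fun y : Fin q → ℝ => y ⬝ᵥ y)
      (f := fun x : Fin d → ℝ => N *ᵥ x + e) p haffN
  have h3 := h1.add (h2.const_mul (lam / 2))
  refine h3.congr_fderiv (Eq.symm ?_)
  ext v
  simp [dotCLM_apply, mulVecCLM_apply, add_dotProduct, smul_dotProduct,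
    Matrix.dotProduct_mulVec, Matrix.mulVec_transpose, Matrix.smul_vecMul,
    Matrix.add_vecMul]
  ring

lemma min_grad_zero {d' : ℕ} {g : (Fin d' → ℝ) → ℝ} {w : Fin d' → ℝ} {p : Fin d' → ℝ}
    (hmin : ∀ x, g p ≤ g x) (hg : HasFDerivAt g (dotCLM w) p) : w = 0 := by
  have hloc : IsLocalMin g p := Filter.Eventually.of_forall fun x => hmin x
  have h0 := hloc.hasFDerivAt_eq_zero hg
  have hww : w ⬝ᵥ w = 0 := by
    have := congrFun (congrArg DFunLike.coe h0) w
    simpa [dotCLM_apply] using this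
  funext i
  have h1 : ∑ j, w j ^ 2 = 0 := by
    rw [← hww]; simp [dotProduct, sq]
  have h2 := (Finset.sum_eq_zero_iff_of_nonneg (fun j _ => sq_nonneg (w j))).1 h1 i
    (Finset.mem_univ i)
  exact (pow_eq_zero_iff two_ne_zero).mp h2

variable {f : (Fin k → ℝ) → ℝ} {f' : (Fin k → ℝ) → Fin k → ℝ} {μ : ℝ}

lemma convex_support (hconv : ConvexOn ℝ Set.univ f)
    (hdiff : ∀ w, HasFDerivAt f (dotCLM (f' w)) w) (x y : Fin k → ℝ) :
    f x + f' x ⬝ᵥ (y - x) ≤ f y := by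
  set φ : ℝ → ℝ := fun t => f (x + t • (y - x)) with hφdef
  have hφconv : ConvexOn ℝ Set.univ φ := by
    have h := hconv.comp_affineMap (AffineMap.lineMap x y : ℝ →ᵃ[ℝ] (Fin k → ℝ))
    rw [Set.preimage_univ] at h
    have heq : f ∘ ⇑(AffineMap.lineMap x y : ℝ →ᵃ[ℝ] (Fin k → ℝ)) = φ := by
      funext t
      simp [Function.comp, AffineMap.lineMap_apply, hφdef, add_comm]
    rwa [heq] at h
  have hder := hasDerivAt_line hdiff x (y - x) 0
  have hs := hφconv.le_slope_of_hasDerivAt (Set.mem_univ (0:ℝ)) (Set.mem_univ (1:ℝ))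
    zero_lt_one (by simpa using hder)
  have hslope : slope φ 0 1 = φ 1 - φ 0 := by simp [slope_def_field]
  rw [hslope] at hs
  have h0 : φ 0 = f x := by simp [hφdef]
  have h1 : φ 1 = f y := by simp [hφdef]
  rw [h0, h1] at hs
  simpa using by linarith [hs]

lemma descent (hμ : 0 < μ)
    (hdiff : ∀ w, HasFDerivAt f (dotCLM (f' w)) w)
    (hsmooth : ∀ w v, norm2 (f' w - f' v) ≤ μ * norm2 (w - v)) (x y : Fin k → ℝ) :
    f y ≤ f x + f' x ⬝ᵥ (y - x) + μ / 2 * ((y - x) ⬝ᵥ (y - x)) := by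
  set d := y - x with hd
  set c1 : ℝ := f' x ⬝ᵥ d with hc1
  set c2 : ℝ := μ / 2 * (d ⬝ᵥ d) with hc2
  set χ : ℝ → ℝ := fun t => f (x + t • d) - t * c1 - t ^ 2 * c2 with hχ
  have hχ' : ∀ t : ℝ, HasDerivAt χ (f' (x + t • d) ⬝ᵥ d - c1 - 2 * t ^ 1 * c2) t := by
    intro t
    have h1 := hasDerivAt_line hdiff x d t
    have h2 : HasDerivAt (fun t : ℝ => t * c1) c1 t := by
      simpa using (hasDerivAt_id t).mul_const c1
    have h3 : HasDerivAt (fun t : ℝ => t ^ 2 * c2) (2 * t ^ 1 * c2) t := by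
      simpa using (hasDerivAt_pow 2 t).mul_const c2
    exact (h1.sub h2).sub h3
  have hderiv_nonpos : ∀ t ∈ interior (Set.Icc (0:ℝ) 1), deriv χ t ≤ 0 := by
    intro t ht
    rw [interior_Icc] at ht
    have ht0 : 0 < t := ht.1
    rw [(hχ' t).deriv]
    have hcs : (f' (x + t • d) - f' x) ⬝ᵥ d ≤ norm2 (f' (x + t • d) - f' x) * norm2 d :=
      dot_le_norm2_mul_norm2 _ _
    have hsm : norm2 (f' (x + t • d) - f' x) ≤ μ * norm2 (x + t • d - x) := hsmooth _ _
    have hnn : norm2 (x + t • d - x) = t * norm2 d := by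
      have : x + t • d - x = t • d := by abel
      rw [this, norm2_smul, abs_of_pos ht0]
    have hd2 : norm2 d * norm2 d = d ⬝ᵥ d := by
      have := sq_norm2 d; nlinarith [this]
    have hsub : (f' (x + t • d) - f' x) ⬝ᵥ d = f' (x + t • d) ⬝ᵥ d - f' x ⬝ᵥ d :=
      sub_dotProduct _ _ _
    have hn2d : 0 ≤ norm2 d := norm2_nonneg d
    have h5 : norm2 (f' (x + t • d) - f' x) * norm2 d ≤ μ * (t * norm2 d) * norm2 d :=
      mul_le_mul_of_nonneg_right (by rw [← hnn]; exact hsm) hn2d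
    calc f' (x + t • d) ⬝ᵥ d - c1 - 2 * t ^ 1 * c2
        = (f' (x + t • d) - f' x) ⬝ᵥ d - 2 * t * c2 := by rw [hsub, hc1]; ring
      _ ≤ μ * (t * norm2 d) * norm2 d - 2 * t * c2 := by linarith [hcs, h5]
      _ = μ * t * (norm2 d * norm2 d) - 2 * t * c2 := by ring
      _ = 0 := by rw [hd2, hc2]; ring
  have hcont : ContinuousOn χ (Set.Icc 0 1) :=
    fun t _ => ((hχ' t).differentiableAt.continuousAt).continuousWithinAt
  have hdiffOn : DifferentiableOn ℝ χ (interior (Set.Icc (0:ℝ) 1)) :=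
    fun t _ => ((hχ' t).differentiableAt).differentiableWithinAt
  have hanti := antitoneOn_of_deriv_nonpos (convex_Icc (0:ℝ) 1) hcont hdiffOn hderiv_nonpos
  have h01 := hanti (Set.left_mem_Icc.mpr zero_le_one) (Set.right_mem_Icc.mpr zero_le_one)
    zero_le_one
  have hχ0 : χ 0 = f x := by simp [hχ]
  have hχ1 : χ 1 = f y - c1 - c2 := by simp [hχ, hd]
  rw [hχ0, hχ1] at h01
  rw [hc1, hc2] at h01 ⊢
  linarith

lemma cocoercive (hμ : 0 < μ) (hconv : ConvexOn ℝ Set.univ f)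
    (hdiff : ∀ w, HasFDerivAt f (dotCLM (f' w)) w)
    (hsmooth : ∀ w v, norm2 (f' w - f' v) ≤ μ * norm2 (w - v)) (a b : Fin k → ℝ) :
    μ⁻¹ * ((f' a - f' b) ⬝ᵥ (f' a - f' b)) ≤ (f' a - f' b) ⬝ᵥ (a - b) := by
  have key : ∀ a b : Fin k → ℝ,
      f b + f' b ⬝ᵥ (a - b) + 1 / (2 * μ) * ((f' a - f' b) ⬝ᵥ (f' a - f' b)) ≤ f a := by
    intro a b
    set Δ := f' a - f' b with hΔ
    set w := a - μ⁻¹ • Δ with hw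
    have h1 := convex_support hconv hdiff b w
    have h2 := descent hμ hdiff hsmooth a w
    have hwa : w - a = -(μ⁻¹ • Δ) := by rw [hw]; abel
    have hwb : w - b = (a - b) - μ⁻¹ • Δ := by rw [hw]; abel
    have e1 : f' b ⬝ᵥ (w - b) = f' b ⬝ᵥ (a - b) - μ⁻¹ * (f' b ⬝ᵥ Δ) := by
      rw [hwb, dotProduct_sub, dotProduct_smul]; simp
    have e2 : f' a ⬝ᵥ (w - a) = -(μ⁻¹ * (f' a ⬝ᵥ Δ)) := by
      rw [hwa, dotProduct_neg, dotProduct_smul]; simp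
    have e3 : (w - a) ⬝ᵥ (w - a) = μ⁻¹ * μ⁻¹ * (Δ ⬝ᵥ Δ) := by
      rw [hwa]
      simp [neg_dotProduct, dotProduct_neg, smul_dotProduct,
        dotProduct_smul]
      ring
    have e4 : f' a ⬝ᵥ Δ - f' b ⬝ᵥ Δ = Δ ⬝ᵥ Δ := by
      rw [hΔ, sub_dotProduct]
    have hμne : μ ≠ 0 := ne_of_gt hμ
    rw [e1] at h1
    rw [e2, e3] at h2
    have hfield : μ / 2 * (μ⁻¹ * μ⁻¹ * (Δ ⬝ᵥ Δ)) = 1 / (2 * μ) * (Δ ⬝ᵥ Δ) := by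
      field_simp
    rw [hfield] at h2
    have hcomb : μ⁻¹ * (f' a ⬝ᵥ Δ) - μ⁻¹ * (f' b ⬝ᵥ Δ) = μ⁻¹ * (Δ ⬝ᵥ Δ) := by
      rw [← mul_sub, e4]
    have hhalf : μ⁻¹ * (Δ ⬝ᵥ Δ) - 1 / (2 * μ) * (Δ ⬝ᵥ Δ) = 1 / (2 * μ) * (Δ ⬝ᵥ Δ) := by
      field_simp; ring
    linarith
  have k1 := key a b
  have k2 := key b a
  have hsymm : (f' b - f' a) ⬝ᵥ (f' b - f' a) = (f' a - f' b) ⬝ᵥ (f' a - f' b) := by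
    have h : f' b - f' a = -(f' a - f' b) := by abel
    rw [h, neg_dotProduct, dotProduct_neg]; ring
  have hba : f' a ⬝ᵥ (b - a) = -(f' a ⬝ᵥ (a - b)) := by
    have h : b - a = -(a - b) := by abel
    rw [h, dotProduct_neg]
  have hsub : f' a ⬝ᵥ (a - b) - f' b ⬝ᵥ (a - b) = (f' a - f' b) ⬝ᵥ (a - b) := by
    rw [sub_dotProduct]
  rw [hsymm] at k2
  rw [hba] at k2
  have hμne : μ ≠ 0 := ne_of_gt hμ
  have hsplit : μ⁻¹ = 1 / (2 * μ) + 1 / (2 * μ) := by field_simp; ring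
  rw [hsplit]
  linarith

lemma grad_mem_fenchelDom
    (hsupp : ∀ x y : Fin k → ℝ, f x + f' x ⬝ᵥ (y - x) ≤ f y) (p : Fin k → ℝ) :
    f' p ∈ fenchelDom f := by
  refine ⟨p ⬝ᵥ f' p - f p, ?_⟩
  rintro r ⟨w, rfl⟩
  have h := hsupp p w
  have e1 : f' p ⬝ᵥ (w - p) = f' p ⬝ᵥ w - f' p ⬝ᵥ p := dotProduct_sub _ _ _
  have e2 : f' p ⬝ᵥ w = w ⬝ᵥ f' p := dotProduct_comm _ _
  have e3 : f' p ⬝ᵥ p = p ⬝ᵥ f' p := dotProduct_comm _ _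
  simp only [e1, e2, e3] at h
  show w ⬝ᵥ f' p - f w ≤ p ⬝ᵥ f' p - f p
  linarith

end Aux

/-- the quadratic form in `Zf` equals a squared norm. -/
lemma quad_eq {n d : ℕ} (A : Matrix (Fin n) (Fin d) ℝ) (P : Matrix (Fin d) (Fin d) ℝ)
    (hsym : Pᵀ = P) (hidem : P * P = P) (Δ : Fin n → ℝ) :
    Δ ⬝ᵥ (A * (1 - P) * Aᵀ) *ᵥ Δ = ((1 - P) *ᵥ (Aᵀ *ᵥ Δ)) ⬝ᵥ ((1 - P) *ᵥ (Aᵀ *ᵥ Δ)) := by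
  have hsym' : (1 - P)ᵀ = 1 - P := by
    rw [Matrix.transpose_sub, Matrix.transpose_one, hsym]
  have hid' : (1 - P) * (1 - P) = 1 - P := by
    rw [Matrix.mul_sub, Matrix.sub_mul, Matrix.sub_mul, Matrix.one_mul, Matrix.mul_one, hidem]
    simp
  set w := Aᵀ *ᵥ Δ with hw
  have h1 : Δ ⬝ᵥ (A * (1 - P) * Aᵀ) *ᵥ Δ = Δ ⬝ᵥ A *ᵥ ((1 - P) *ᵥ w) := by
    rw [← Matrix.mulVec_mulVec, ← Matrix.mulVec_mulVec]
  rw [h1, Matrix.dotProduct_mulVec, ← Matrix.mulVec_transpose, ← hw]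
  have h2 : ((1 - P) *ᵥ w) ⬝ᵥ ((1 - P) *ᵥ w) = w ⬝ᵥ ((1 - P) *ᵥ w) :=
    calc ((1 - P) *ᵥ w) ⬝ᵥ ((1 - P) *ᵥ w)
        = w ⬝ᵥ ((1 - P) *ᵥ ((1 - P) *ᵥ w)) := dot_mulVec_symm hsym' w _
      _ = w ⬝ᵥ ((1 - P) *ᵥ w) := by rw [Matrix.mulVec_mulVec, hid']
  rw [h2]

/-- the set underlying `Zf` (for `B = A`, `Pperp = 1 - P`) is bounded above. -/
lemma Zf_set_bddAbove {n d m : ℕ} (f : (Fin n → ℝ) → ℝ) (A : Matrix (Fin n) (Fin d) ℝ)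
    {S : Matrix (Fin d) (Fin m) ℝ} {P : Matrix (Fin d) (Fin d) ℝ} (hP : IsOrthProj S P)
    (zs : Fin n → ℝ) :
    BddAbove {r | ∃ Δ : Fin n → ℝ, Δ ≠ 0 ∧ zs + Δ ∈ fenchelDom f ∧
      r = Real.sqrt (Δ ⬝ᵥ (A * (1 - P) * Aᵀ).mulVec Δ) / norm2 Δ} := by
  obtain ⟨hsym, hidem, hPS, C, hPC⟩ := hP
  refine ⟨Real.sqrt (∑ i, ∑ j, (1 - P) i j ^ 2) * Real.sqrt (∑ i, ∑ j, Aᵀ i j ^ 2), ?_⟩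
  rintro r ⟨Δ, hΔ0, _, rfl⟩
  rw [quad_eq A P hsym hidem, ← norm2_eq_sqrt_dot]
  rw [div_le_iff₀ (norm2_pos hΔ0)]
  calc norm2 ((1 - P) *ᵥ (Aᵀ *ᵥ Δ))
      ≤ Real.sqrt (∑ i, ∑ j, (1 - P) i j ^ 2) * norm2 (Aᵀ *ᵥ Δ) := norm2_mulVec_le _ _
    _ ≤ Real.sqrt (∑ i, ∑ j, (1 - P) i j ^ 2) *
        (Real.sqrt (∑ i, ∑ j, Aᵀ i j ^ 2) * norm2 Δ) := by
        apply mul_le_mul_of_nonneg_left (norm2_mulVec_le _ _) (Real.sqrt_nonneg _)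
    _ = Real.sqrt (∑ i, ∑ j, (1 - P) i j ^ 2) * Real.sqrt (∑ i, ∑ j, Aᵀ i j ^ 2) * norm2 Δ :=
        by ring

lemma Zf_nonneg {k q : ℕ} (f : (Fin k → ℝ) → ℝ) (B : Matrix (Fin k) (Fin q) ℝ)
    (Pperp : Matrix (Fin q) (Fin q) ℝ) (zs : Fin k → ℝ) : 0 ≤ Zf f B Pperp zs := by
  apply Real.sSup_nonneg
  rintro r ⟨Δ, hΔ0, _, rfl⟩
  exact div_nonneg (Real.sqrt_nonneg _) (norm2_nonneg _)

/-- key bound: `‖(1-P) Aᵀ Δ‖ ≤ Zf · ‖Δ‖` for admissible `Δ`. -/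
lemma norm2_le_Zf {n d m : ℕ} (f : (Fin n → ℝ) → ℝ) (A : Matrix (Fin n) (Fin d) ℝ)
    {S : Matrix (Fin d) (Fin m) ℝ} {P : Matrix (Fin d) (Fin d) ℝ} (hP : IsOrthProj S P)
    (zs : Fin n → ℝ) {Δ : Fin n → ℝ} (hΔ0 : Δ ≠ 0) (hdom : zs + Δ ∈ fenchelDom f) :
    norm2 ((1 - P) *ᵥ (Aᵀ *ᵥ Δ)) ≤ Zf f A (1 - P) zs * norm2 Δ := by
  obtain ⟨hsym, hidem, hPS, C, hPC⟩ := hP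
  have hmem : norm2 ((1 - P) *ᵥ (Aᵀ *ᵥ Δ)) / norm2 Δ ∈
      {r | ∃ Δ : Fin n → ℝ, Δ ≠ 0 ∧ zs + Δ ∈ fenchelDom f ∧
        r = Real.sqrt (Δ ⬝ᵥ (A * (1 - P) * Aᵀ).mulVec Δ) / norm2 Δ} :=
    ⟨Δ, hΔ0, hdom, by rw [quad_eq A P hsym hidem, ← norm2_eq_sqrt_dot]⟩
  have hle := le_csSup (Zf_set_bddAbove f A ⟨hsym, hidem, hPS, C, hPC⟩ zs) hmem
  rw [div_le_iff₀ (norm2_pos hΔ0)] at hle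
  exact hle


set_option maxHeartbeats 2000000 in
/-- per-iteration contraction: for any point `x̃⁽ᵗ⁾`, if `α⁽ᵗ⁺¹⁾`
minimizes `α ↦ f(A S α + A x̃⁽ᵗ⁾) + (λ/2)‖S α + x̃⁽ᵗ⁾‖₂²` and
`x̃⁽ᵗ⁺¹⁾ = -λ⁻¹ Aᵀ ∇f(A S α⁽ᵗ⁺¹⁾ + A x̃⁽ᵗ⁾)`, then, provided `λ ≥ 2 μ Z_f²`,
`‖x̃⁽ᵗ⁺¹⁾ - x*‖₂ ≤ √(μ/(2λ)) Z_f ‖x̃⁽ᵗ⁾ - x*‖₂`. -/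
theorem statement_8 {n d m : ℕ} (f : (Fin n → ℝ) → ℝ) (f' : (Fin n → ℝ) → Fin n → ℝ)
    (A : Matrix (Fin n) (Fin d) ℝ) (μ lam : ℝ)
    (hμ : 0 < μ) (hlam : 0 < lam)
    (hconv : ConvexOn ℝ Set.univ f)
    (hdiff : ∀ w, HasFDerivAt f (dotCLM (f' w)) w)
    (hsmooth : ∀ w v, norm2 (f' w - f' v) ≤ μ * norm2 (w - v))
    (S : Matrix (Fin d) (Fin m) ℝ) (P : Matrix (Fin d) (Fin d) ℝ)
    (hP : IsOrthProj S P)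
    (xs : Fin d → ℝ)
    (hxs : ∀ x, f (A.mulVec xs) + lam / 2 * norm2 xs ^ 2
        ≤ f (A.mulVec x) + lam / 2 * norm2 x ^ 2)
    (hZ : 2 * μ * Zf f A (1 - P) (f' (A.mulVec xs)) ^ 2 ≤ lam)
    (xt : Fin d → ℝ) (αs : Fin m → ℝ)
    (hαs : ∀ a : Fin m → ℝ,
      f ((A * S).mulVec αs + A.mulVec xt) + lam / 2 * norm2 (S.mulVec αs + xt) ^ 2
        ≤ f ((A * S).mulVec a + A.mulVec xt) + lam / 2 * norm2 (S.mulVec a + xt) ^ 2) :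
    norm2 (-(lam⁻¹ • Aᵀ.mulVec (f' ((A * S).mulVec αs + A.mulVec xt))) - xs)
      ≤ Real.sqrt (μ / (2 * lam)) * Zf f A (1 - P) (f' (A.mulVec xs))
        * norm2 (xt - xs) := by
  obtain ⟨hsym, hidem, hPS, C, hPC⟩ := hP
  have hsupp : ∀ x y : Fin n → ℝ, f x + f' x ⬝ᵥ (y - x) ≤ f y :=
    convex_support hconv hdiff
  set zsv := f' (A *ᵥ xs) with hzsv
  set ztv := f' ((A * S) *ᵥ αs + A *ᵥ xt) with hztv
  set Δ := ztv - zsv with hΔdef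
  set w := Aᵀ *ᵥ Δ with hwdef
  set u := S *ᵥ αs + xt - xs with hudef
  set Z := Zf f A (1 - P) zsv with hZdef
  set tdist := norm2 (xt - xs) with htdef
  set s := norm2 Δ with hsdef
  -- first-order optimality at xs
  have hg1 : HasFDerivAt (fun x => f (A *ᵥ x) + lam / 2 * norm2 x ^ 2)
      (dotCLM (Aᵀ *ᵥ zsv + lam • xs)) xs := by
    have h := hasFDerivAt_obj hdiff A 0 (1 : Matrix (Fin d) (Fin d) ℝ) 0 lam xs
    have hfun : (fun x : Fin d → ℝ => f (A *ᵥ x + 0) + lam / 2 *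
        (((1 : Matrix (Fin d) (Fin d) ℝ) *ᵥ x + 0) ⬝ᵥ ((1 : Matrix (Fin d) (Fin d) ℝ) *ᵥ x + 0)))
        = fun x => f (A *ᵥ x) + lam / 2 * norm2 x ^ 2 := by
      funext x
      rw [sq_norm2]
      simp [Matrix.one_mulVec]
    rw [hfun] at h
    simpa [Matrix.one_mulVec, Matrix.transpose_one, hzsv] using h
  have E1 : Aᵀ *ᵥ zsv + lam • xs = 0 := min_grad_zero hxs hg1
  -- first-order optimality at αs
  have hg2 : HasFDerivAt
      (fun a => f ((A * S) *ᵥ a + A *ᵥ xt) + lam / 2 * norm2 (S *ᵥ a + xt) ^ 2)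
      (dotCLM ((A * S)ᵀ *ᵥ ztv + lam • (Sᵀ *ᵥ (S *ᵥ αs + xt)))) αs := by
    have h := hasFDerivAt_obj hdiff (A * S) (A *ᵥ xt) S xt lam αs
    have hfun : (fun a : Fin m → ℝ => f ((A * S) *ᵥ a + A *ᵥ xt) + lam / 2 *
        ((S *ᵥ a + xt) ⬝ᵥ (S *ᵥ a + xt)))
        = fun a => f ((A * S) *ᵥ a + A *ᵥ xt) + lam / 2 * norm2 (S *ᵥ a + xt) ^ 2 := by
      funext a
      rw [sq_norm2]
    rw [hfun] at h
    exact h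
  have E2' : (A * S)ᵀ *ᵥ ztv + lam • (Sᵀ *ᵥ (S *ᵥ αs + xt)) = 0 := min_grad_zero hαs hg2
  have E2 : Sᵀ *ᵥ (Aᵀ *ᵥ ztv + lam • (S *ᵥ αs + xt)) = 0 := by
    rw [Matrix.mulVec_add, Matrix.mulVec_smul, Matrix.mulVec_mulVec, ← Matrix.transpose_mul]
    exact E2'
  -- combined optimality through Sᵀ
  have E1S : Sᵀ *ᵥ (Aᵀ *ᵥ zsv + lam • xs) = 0 := by
    rw [E1, Matrix.mulVec_zero]
  have hexp : w + lam • u = (Aᵀ *ᵥ ztv + lam • (S *ᵥ αs + xt)) - (Aᵀ *ᵥ zsv + lam • xs) := by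
    rw [hwdef, hΔdef, hudef, Matrix.mulVec_sub]
    rw [smul_sub, smul_add]
    abel
  have hSw : Sᵀ *ᵥ (w + lam • u) = 0 := by
    rw [hexp, Matrix.mulVec_sub, E2, E1S, sub_zero]
  have hPkill : ∀ v : Fin d → ℝ, Sᵀ *ᵥ v = 0 → P *ᵥ v = 0 := by
    intro v hv
    calc P *ᵥ v = (Cᵀ * Sᵀ) *ᵥ v := by rw [← Matrix.transpose_mul, ← hPC, hsym]
    _ = Cᵀ *ᵥ (Sᵀ *ᵥ v) := (Matrix.mulVec_mulVec v Cᵀ Sᵀ).symm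
    _ = 0 := by rw [hv, Matrix.mulVec_zero]
  have hPw : P *ᵥ w = -(lam • (P *ᵥ u)) := by
    have h := hPkill _ hSw
    rw [Matrix.mulVec_add, Matrix.mulVec_smul] at h
    exact eq_neg_of_add_eq_zero_left h
  -- rewrite the iterate expression
  have hxs_eq : xs = -(lam⁻¹ • (Aᵀ *ᵥ zsv)) := by
    have h1 : lam • xs = -(Aᵀ *ᵥ zsv) := eq_neg_of_add_eq_zero_right E1
    have h2 : xs = lam⁻¹ • (lam • xs) := (inv_smul_smul₀ hlam.ne' xs).symm
    rw [h2, h1, smul_neg]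
  have hvec : -(lam⁻¹ • Aᵀ.mulVec ztv) - xs = -(lam⁻¹ • w) := by
    rw [hxs_eq, hwdef, hΔdef, Matrix.mulVec_sub, smul_sub]
    abel
  rw [hvec]
  have hLHS : norm2 (-(lam⁻¹ • w)) = lam⁻¹ * norm2 w := by
    rw [← neg_smul, norm2_smul, abs_neg, abs_of_pos (inv_pos.2 hlam)]
  rw [hLHS]
  -- nonnegativity facts
  have hZ0 : 0 ≤ Z := Zf_nonneg f A (1 - P) zsv
  have ht0 : 0 ≤ tdist := norm2_nonneg _
  have hs0 : 0 ≤ s := norm2_nonneg _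
  have hRHS0 : 0 ≤ Real.sqrt (μ / (2 * lam)) * Z * tdist :=
    mul_nonneg (mul_nonneg (Real.sqrt_nonneg _) hZ0) ht0
  by_cases hΔ0 : Δ = 0
  · -- degenerate case: the iterate is exactly xs
    have hw0 : w = 0 := by rw [hwdef, hΔ0, Matrix.mulVec_zero]
    have : norm2 w = 0 := by
      rw [hw0, norm2]; simp
    rw [this, mul_zero]
    exact hRHS0
  -- main case
  have hdom : zsv + Δ ∈ fenchelDom f := by
    have h : zsv + Δ = ztv := by rw [hΔdef]; abel
    rw [h, hztv]
    exact grad_mem_fenchelDom hsupp _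
  have hqZ : norm2 ((1 - P) *ᵥ w) ≤ Z * s := by
    rw [hwdef]
    exact norm2_le_Zf f A ⟨hsym, hidem, hPS, C, hPC⟩ zsv hΔ0 hdom
  -- cocoercivity
  have hcoco : μ⁻¹ * (Δ ⬝ᵥ Δ) ≤ Δ ⬝ᵥ (A *ᵥ u) := by
    have h := cocoercive hμ hconv hdiff hsmooth ((A * S) *ᵥ αs + A *ᵥ xt) (A *ᵥ xs)
    have harg : ((A * S) *ᵥ αs + A *ᵥ xt) - A *ᵥ xs = A *ᵥ u := by
      rw [hudef, Matrix.mulVec_sub, Matrix.mulVec_add, Matrix.mulVec_mulVec]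
    rw [harg] at h
    exact h
  have hwu : Δ ⬝ᵥ (A *ᵥ u) = w ⬝ᵥ u := by
    rw [Matrix.dotProduct_mulVec, hwdef, Matrix.mulVec_transpose]
  have hsym' : (1 - P)ᵀ = 1 - P := by
    rw [Matrix.transpose_sub, Matrix.transpose_one, hsym]
  have hq : (1 - P) *ᵥ w = w - P *ᵥ w := by
    rw [Matrix.sub_mulVec, Matrix.one_mulVec]
  have hPuu : (P *ᵥ u) ⬝ᵥ (P *ᵥ u) = (P *ᵥ u) ⬝ᵥ u := by
    have h1 : (P *ᵥ u) ⬝ᵥ (P *ᵥ u) = u ⬝ᵥ (P *ᵥ (P *ᵥ u)) := dot_mulVec_symm hsym u _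
    rw [h1, Matrix.mulVec_mulVec, hidem, dotProduct_comm]
  have hPww : (P *ᵥ w) ⬝ᵥ (P *ᵥ w) = (P *ᵥ w) ⬝ᵥ w := by
    have h1 : (P *ᵥ w) ⬝ᵥ (P *ᵥ w) = w ⬝ᵥ (P *ᵥ (P *ᵥ w)) := dot_mulVec_symm hsym w _
    rw [h1, Matrix.mulVec_mulVec, hidem, dotProduct_comm]
  have hPwu_dot : (P *ᵥ w) ⬝ᵥ u = -(lam * ((P *ᵥ u) ⬝ᵥ (P *ᵥ u))) := by
    rw [hPw, neg_dotProduct, smul_dotProduct, hPuu, smul_eq_mul]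
  have hsplit : ((1 - P) *ᵥ w) ⬝ᵥ u = w ⬝ᵥ u - (P *ᵥ w) ⬝ᵥ u := by
    rw [hq, sub_dotProduct]
  have hperp_u : ((1 - P) *ᵥ w) ⬝ᵥ u = ((1 - P) *ᵥ w) ⬝ᵥ (xt - xs) := by
    have e1 : ((1 - P) *ᵥ w) ⬝ᵥ u = w ⬝ᵥ ((1 - P) *ᵥ u) := dot_mulVec_symm hsym' w u
    have e2 : (1 - P) *ᵥ u = (1 - P) *ᵥ (xt - xs) := by
      have hu' : u = S *ᵥ αs + (xt - xs) := by rw [hudef]; abel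
      rw [hu', Matrix.mulVec_add]
      have hz : (1 - P) *ᵥ (S *ᵥ αs) = 0 := by
        rw [Matrix.sub_mulVec, Matrix.one_mulVec, Matrix.mulVec_mulVec, hPS, sub_self]
      rw [hz, zero_add]
    have e3 : ((1 - P) *ᵥ w) ⬝ᵥ (xt - xs) = w ⬝ᵥ ((1 - P) *ᵥ (xt - xs)) :=
      dot_mulVec_symm hsym' w (xt - xs)
    rw [e1, e2, e3]
  have hCS : ((1 - P) *ᵥ w) ⬝ᵥ (xt - xs) ≤ norm2 ((1 - P) *ᵥ w) * tdist :=
    dot_le_norm2_mul_norm2 _ _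
  have hqt : norm2 ((1 - P) *ᵥ w) * tdist ≤ Z * s * tdist :=
    mul_le_mul_of_nonneg_right hqZ ht0
  -- the key inequality (★)
  have star : μ⁻¹ * (Δ ⬝ᵥ Δ) + lam * ((P *ᵥ u) ⬝ᵥ (P *ᵥ u)) ≤ Z * s * tdist := by
    have h1 := hcoco
    rw [hwu] at h1
    linarith [hsplit, hPwu_dot, hperp_u, hCS, hqt, h1]
  -- multiply ★ by μ
  have star2 : Δ ⬝ᵥ Δ + μ * (lam * ((P *ᵥ u) ⬝ᵥ (P *ᵥ u))) ≤ μ * (Z * s * tdist) := by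
    calc Δ ⬝ᵥ Δ + μ * (lam * ((P *ᵥ u) ⬝ᵥ (P *ᵥ u)))
        = μ * (μ⁻¹ * (Δ ⬝ᵥ Δ) + lam * ((P *ᵥ u) ⬝ᵥ (P *ᵥ u))) := by
          rw [mul_add, ← mul_assoc μ μ⁻¹, mul_inv_cancel₀ hμ.ne', one_mul]
      _ ≤ μ * (Z * s * tdist) := mul_le_mul_of_nonneg_left star hμ.le
  -- Pythagoras
  have hpyth : w ⬝ᵥ w = (P *ᵥ w) ⬝ᵥ (P *ᵥ w) + ((1 - P) *ᵥ w) ⬝ᵥ ((1 - P) *ᵥ w) := by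
    have hqq : ((1 - P) *ᵥ w) ⬝ᵥ ((1 - P) *ᵥ w)
        = w ⬝ᵥ w - w ⬝ᵥ (P *ᵥ w) - ((P *ᵥ w) ⬝ᵥ w - (P *ᵥ w) ⬝ᵥ (P *ᵥ w)) := by
      rw [hq, sub_dotProduct, dotProduct_sub, dotProduct_sub]
    have hcomm : w ⬝ᵥ (P *ᵥ w) = (P *ᵥ w) ⬝ᵥ w := dotProduct_comm _ _
    linarith [hqq, hcomm, hPww]
  have hPw2 : (P *ᵥ w) ⬝ᵥ (P *ᵥ w) = lam ^ 2 * ((P *ᵥ u) ⬝ᵥ (P *ᵥ u)) := by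
    rw [hPw]
    simp [neg_dotProduct, dotProduct_neg, smul_dotProduct,
      dotProduct_smul]
    ring
  have hqq2 : ((1 - P) *ᵥ w) ⬝ᵥ ((1 - P) *ᵥ w) ≤ Z ^ 2 * s ^ 2 := by
    have h1 := sq_norm2 ((1 - P) *ᵥ w)
    nlinarith [hqZ, norm2_nonneg ((1 - P) *ᵥ w), hZ0, hs0]
  have hDs : s ^ 2 = Δ ⬝ᵥ Δ := sq_norm2 Δ
  have hpuu0 : 0 ≤ (P *ᵥ u) ⬝ᵥ (P *ᵥ u) := dot_self_nonneg _
  -- final quadratic bound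
  clear_value zsv ztv Δ w u Z tdist s
  have hWsq : μ * (w ⬝ᵥ w) ≤ μ * (μ * lam * Z ^ 2 * tdist ^ 2 / 2) := by
    have e0 : μ * (w ⬝ᵥ w) = μ * (lam ^ 2 * ((P *ᵥ u) ⬝ᵥ (P *ᵥ u)))
        + μ * (((1 - P) *ᵥ w) ⬝ᵥ ((1 - P) *ᵥ w)) := by
      rw [hpyth, hPw2]; ring
    have e1 := mul_le_mul_of_nonneg_left star2 hlam.le
    have e2 : μ * (((1 - P) *ᵥ w) ⬝ᵥ ((1 - P) *ᵥ w)) ≤ μ * (Z ^ 2 * s ^ 2) :=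
      mul_le_mul_of_nonneg_left hqq2 hμ.le
    have e3 : 0 ≤ (lam - 2 * μ * Z ^ 2) * s ^ 2 :=
      mul_nonneg (sub_nonneg.2 hZ) (sq_nonneg s)
    have e4 : 0 ≤ lam * (s - μ * Z * tdist) ^ 2 := mul_nonneg hlam.le (sq_nonneg _)
    nlinarith [e0, e1, e2, e3, e4, hDs]
  have hWsq' : w ⬝ᵥ w ≤ μ * lam * Z ^ 2 * tdist ^ 2 / 2 :=
    le_of_mul_le_mul_left hWsq hμ
  have hR2 : Real.sqrt (μ / (2 * lam)) ^ 2 = μ / (2 * lam) :=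
    Real.sq_sqrt (by positivity)
  have final2 : (lam⁻¹ * norm2 w) ^ 2 ≤ (Real.sqrt (μ / (2 * lam)) * Z * tdist) ^ 2 := by
    rw [mul_pow, mul_pow, mul_pow, sq_norm2 w, hR2, inv_pow]
    rw [inv_mul_eq_div, div_le_iff₀ (by positivity : (0:ℝ) < lam ^ 2)]
    calc w ⬝ᵥ w ≤ μ * lam * Z ^ 2 * tdist ^ 2 / 2 := hWsq'
      _ = μ / (2 * lam) * Z ^ 2 * tdist ^ 2 * lam ^ 2 := by
          field_simp
  have hLHS0 : 0 ≤ lam⁻¹ * norm2 w := mul_nonneg (inv_nonneg.2 hlam.le) (norm2_nonneg _)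
  have h := Real.sqrt_le_sqrt final2
  rwa [Real.sqrt_sq hLHS0, Real.sqrt_sq hRHS0] at h


end Sketch
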